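/- Let $a \in (0,1)$ and let $k_1, k_2$ be nonzero real numbers (possibly of different signs). Then for all continuous functions $f_1 : [0,a] \to \mathbb{R}$ and $f_2 : [a,1] \to \mathbb{R}$ there exists a unique pair of twice continuously differentiable functions $\psi_1 : [0,a] \to \mathbb{R}$ and $\psi_2 : [a,1] \to \mathbb{R}$ satisfying: $-k_1 \psi_1'' = f_1$ on $[0,a]$; $-k_2 \psi_2'' = f_2$ on $[a,1]$; the transmission conditions $\psi_1(a) = \psi_2(a)$ and $k_1 \psi_1'(a) = k_2 \psi_2'(a)$; and the external boundary conditions $\psi_1(0) = 0$ and $\psi_2'(1) = 0$. -/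

import Mathlib

open Set intervalIntegral

lemma hasDerivAt_integral_of_cont {g : ℝ → ℝ} (hg : Continuous g) (c x : ℝ) :
    HasDerivAt (fun u => ∫ t in c..u, g t) (g x) x :=
  integral_hasDerivAt_right (hg.intervalIntegrable _ _)
    (hg.stronglyMeasurableAtFilter _ _) hg.continuousAt

lemma derivWithin_eq {f f' : ℝ → ℝ} {s : Set ℝ} (hs : UniqueDiffOn ℝ s)
    (h : ∀ x, HasDerivAt f (f' x) x) {x : ℝ} (hx : x ∈ s) :
    derivWithin f s x = f' x :=
  ((h x).hasDerivWithinAt (s := s)).derivWithin (hs x hx)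

lemma iter2_eq {f f' f'' : ℝ → ℝ} {s : Set ℝ} (hs : UniqueDiffOn ℝ s)
    (h1 : ∀ x, HasDerivAt f (f' x) x) (h2 : ∀ x, HasDerivAt f' (f'' x) x)
    {x : ℝ} (hx : x ∈ s) :
    iteratedDerivWithin 2 f s x = f'' x := by
  rw [show (2:ℕ) = 1 + 1 from rfl, iteratedDerivWithin_succ]
  have h1' : EqOn (iteratedDerivWithin 1 f s) f' s := by
    intro y hy
    rw [iteratedDerivWithin_one, derivWithin_eq hs h1 hy]
  rw [derivWithin_congr h1' (h1' hx),
    ((h2 x).hasDerivWithinAt (s := s)).derivWithin (hs x hx)]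

lemma const_on_Icc {c d : ℝ} {w : ℝ → ℝ}
    (hw : ContinuousOn w (Icc c d))
    (h : ∀ x ∈ Icc c d, HasDerivWithinAt w 0 (Icc c d) x) :
    ∀ x ∈ Icc c d, w x = w c := by
  apply constant_of_has_deriv_right_zero hw
  intro x hx
  exact (h x ⟨hx.1, hx.2.le⟩).mono_of_mem_nhdsWithin (Icc_mem_nhdsGE_of_mem hx)

lemma eq_on_Icc_of_deriv {c d e : ℝ} (he : e ∈ Icc c d)
    {u v g : ℝ → ℝ} (hu : ContinuousOn u (Icc c d))
    (hud : ∀ x ∈ Icc c d, HasDerivWithinAt u (g x) (Icc c d) x)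
    (hv : ∀ x, HasDerivAt v (g x) x) (heq : u e = v e) :
    ∀ x ∈ Icc c d, u x = v x := by
  have hvc : ContinuousOn v (Icc c d) := fun x _ => (hv x).continuousAt.continuousWithinAt
  have hconst : ∀ x ∈ Icc c d, (u - v) x = (u - v) c := by
    apply const_on_Icc (hu.sub hvc)
    intro x hx
    simpa using (hud x hx).sub ((hv x).hasDerivWithinAt)
  intro x hx
  have h1 := hconst x hx
  have h2 := hconst e he
  simp only [Pi.sub_apply] at h1 h2
  rw [heq] at h2
  linarith

lemma sol_deriv {s : Set ℝ} (hs : UniqueDiffOn ℝ s) {φ g : ℝ → ℝ}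
    (hC : ContDiffOn ℝ 2 φ s) (hg : ∀ x ∈ s, iteratedDerivWithin 2 φ s x = g x) :
    ∀ x ∈ s, HasDerivWithinAt (derivWithin φ s) (g x) s x := by
  intro x hx
  have hd : ContDiffOn ℝ 1 (derivWithin φ s) s := hC.derivWithin (m := 1) hs (by norm_num)
  have h := ((hd.differentiableOn (by norm_num)) x hx).hasDerivWithinAt
  have he : derivWithin (derivWithin φ s) s x = g x := by
    have h2 : iteratedDerivWithin 2 φ s x = derivWithin (derivWithin φ s) s x := by
      rw [show (2:ℕ) = 1 + 1 from rfl, iteratedDerivWithin_succ]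
      exact derivWithin_congr (fun y _ => congrFun iteratedDerivWithin_one y)
        (congrFun iteratedDerivWithin_one x)
    rw [← h2, hg x hx]
  rwa [he] at h

/-- Classical solution of the two-material interval problem: `ψ₁` on `[0,a]` with
conductivity `k₁`, `ψ₂` on `[a,1]` with conductivity `k₂`, transmission conditions at
`x = a`, Dirichlet condition at `x = 0` and Neumann condition at `x = 1`. -/
def IsIntervalSolution (a k₁ k₂ : ℝ) (f₁ f₂ : ℝ → ℝ) (ψ₁ ψ₂ : ℝ → ℝ) : Prop :=
  ContDiffOn ℝ 2 ψ₁ (Set.Icc 0 a) ∧ ContDiffOn ℝ 2 ψ₂ (Set.Icc a 1) ∧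
  (∀ x ∈ Set.Icc (0 : ℝ) a, -(k₁ * iteratedDerivWithin 2 ψ₁ (Set.Icc 0 a) x) = f₁ x) ∧
  (∀ x ∈ Set.Icc a (1 : ℝ), -(k₂ * iteratedDerivWithin 2 ψ₂ (Set.Icc a 1) x) = f₂ x) ∧
  ψ₁ a = ψ₂ a ∧
  k₁ * derivWithin ψ₁ (Set.Icc 0 a) a = k₂ * derivWithin ψ₂ (Set.Icc a 1) a ∧
  ψ₁ 0 = 0 ∧
  derivWithin ψ₂ (Set.Icc a 1) 1 = 0

/-- Well-posedness for the two-material interval with one Dirichlet and one Neumann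
endpoint (Remark 3.3): the problem is well-posed for every choice of the nonzero
conductivities `k₁, k₂`, including sign-changing choices. -/
theorem stmt_8 (a : ℝ) (ha : a ∈ Set.Ioo (0 : ℝ) 1)
    (k₁ k₂ : ℝ) (hk₁ : k₁ ≠ 0) (hk₂ : k₂ ≠ 0)
    (f₁ f₂ : ℝ → ℝ)
    (hf₁ : ContinuousOn f₁ (Set.Icc 0 a)) (hf₂ : ContinuousOn f₂ (Set.Icc a 1)) :
    ∃ ψ₁ ψ₂ : ℝ → ℝ, IsIntervalSolution a k₁ k₂ f₁ f₂ ψ₁ ψ₂ ∧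
      ∀ φ₁ φ₂ : ℝ → ℝ, IsIntervalSolution a k₁ k₂ f₁ f₂ φ₁ φ₂ →
        (∀ x ∈ Set.Icc (0 : ℝ) a, φ₁ x = ψ₁ x) ∧
        (∀ x ∈ Set.Icc a (1 : ℝ), φ₂ x = ψ₂ x) := by
  obtain ⟨ha0, ha1⟩ := ha
  have hU₁ : UniqueDiffOn ℝ (Icc (0:ℝ) a) := uniqueDiffOn_Icc ha0
  have hU₂ : UniqueDiffOn ℝ (Icc a (1:ℝ)) := uniqueDiffOn_Icc ha1
  have haI₁ : a ∈ Icc (0:ℝ) a := ⟨ha0.le, le_refl a⟩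
  have haI₂ : a ∈ Icc a (1:ℝ) := ⟨le_refl a, ha1.le⟩
  have h1I₂ : (1:ℝ) ∈ Icc a (1:ℝ) := ⟨ha1.le, le_refl 1⟩
  have h0I₁ : (0:ℝ) ∈ Icc (0:ℝ) a := ⟨le_refl 0, ha0.le⟩
  -- continuous extensions
  set F₁ : ℝ → ℝ := fun x => f₁ (max 0 (min a x)) with hF₁def
  set F₂ : ℝ → ℝ := fun x => f₂ (max a (min 1 x)) with hF₂def
  have hF₁c : Continuous F₁ := by
    apply hf₁.comp_continuous (continuous_const.max (continuous_const.min continuous_id))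
    intro x
    exact ⟨le_max_left _ _, max_le ha0.le (min_le_left _ _)⟩
  have hF₂c : Continuous F₂ := by
    apply hf₂.comp_continuous (continuous_const.max (continuous_const.min continuous_id))
    intro x
    exact ⟨le_max_left _ _, max_le ha1.le (min_le_left _ _)⟩
  have hF₁eq : ∀ x ∈ Icc (0:ℝ) a, F₁ x = f₁ x := by
    intro x hx
    simp only [hF₁def]
    rw [min_eq_right hx.2, max_eq_right hx.1]
  have hF₂eq : ∀ x ∈ Icc a (1:ℝ), F₂ x = f₂ x := by
    intro x hx
    simp only [hF₂def]
    rw [min_eq_right hx.2, max_eq_right hx.1]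
  set G₁ : ℝ → ℝ := fun x => -(F₁ x) / k₁ with hG₁def
  set G₂ : ℝ → ℝ := fun x => -(F₂ x) / k₂ with hG₂def
  have hG₁c : Continuous G₁ := (hF₁c.neg).div_const _
  have hG₂c : Continuous G₂ := (hF₂c.neg).div_const _
  set D₂ : ℝ → ℝ := fun x => ∫ t in (1:ℝ)..x, G₂ t with hD₂def
  have hD₂ : ∀ x, HasDerivAt D₂ (G₂ x) x := fun x => hasDerivAt_integral_of_cont hG₂c 1 x
  set D₁ : ℝ → ℝ := fun x => (k₂ / k₁) * D₂ a + ∫ t in a..x, G₁ t with hD₁def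
  have hD₁ : ∀ x, HasDerivAt D₁ (G₁ x) x :=
    fun x => (hasDerivAt_integral_of_cont hG₁c a x).const_add _
  have hD₁c : Continuous D₁ := Differentiable.continuous fun x => (hD₁ x).differentiableAt
  have hD₂c : Continuous D₂ := Differentiable.continuous fun x => (hD₂ x).differentiableAt
  set ψ₁ : ℝ → ℝ := fun x => ∫ t in (0:ℝ)..x, D₁ t with hψ₁def
  set ψ₂ : ℝ → ℝ := fun x => ψ₁ a + ∫ t in a..x, D₂ t with hψ₂def
  have hψ₁ : ∀ x, HasDerivAt ψ₁ (D₁ x) x := fun x => hasDerivAt_integral_of_cont hD₁c 0 x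
  have hψ₂ : ∀ x, HasDerivAt ψ₂ (D₂ x) x :=
    fun x => (hasDerivAt_integral_of_cont hD₂c a x).const_add _
  -- smoothness
  have hC2 : ∀ (f f' g : ℝ → ℝ), (∀ x, HasDerivAt f (f' x) x) →
      (∀ x, HasDerivAt f' (g x) x) → Continuous g → ContDiff ℝ 2 f := by
    intro f f' g h1 h2 hg
    rw [show (2 : WithTop ℕ∞) = 1 + 1 from rfl, contDiff_succ_iff_deriv]
    refine ⟨fun x => (h1 x).differentiableAt, by simp, ?_⟩
    have : deriv f = f' := funext fun x => (h1 x).deriv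
    rw [this, contDiff_one_iff_deriv]
    refine ⟨fun x => (h2 x).differentiableAt, ?_⟩
    have : deriv f' = g := funext fun x => (h2 x).deriv
    rw [this]; exact hg
  have hψ₁C : ContDiff ℝ 2 ψ₁ := hC2 _ _ _ hψ₁ hD₁ hG₁c
  have hψ₂C : ContDiff ℝ 2 ψ₂ := hC2 _ _ _ hψ₂ hD₂ hG₂c
  have hD₂1 : D₂ 1 = 0 := integral_same
  have hD₁a : D₁ a = (k₂ / k₁) * D₂ a := by simp [hD₁def]
  refine ⟨ψ₁, ψ₂, ⟨hψ₁C.contDiffOn, hψ₂C.contDiffOn, ?_, ?_, ?_, ?_, ?_, ?_⟩, ?_⟩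
  · intro x hx
    rw [iter2_eq hU₁ hψ₁ hD₁ hx, ← hF₁eq x hx, hG₁def]
    field_simp
  · intro x hx
    rw [iter2_eq hU₂ hψ₂ hD₂ hx, ← hF₂eq x hx, hG₂def]
    field_simp
  · simp [hψ₂def]
  · rw [derivWithin_eq hU₁ hψ₁ haI₁, derivWithin_eq hU₂ hψ₂ haI₂, hD₁a]
    field_simp
  · simp [hψ₁def]
  · rw [derivWithin_eq hU₂ hψ₂ h1I₂, hD₂1]
  -- uniqueness
  rintro φ₁ φ₂ ⟨hφ₁C, hφ₂C, hode₁, hode₂, htv, htd, hdir, hneu⟩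
  have hg₂ : ∀ x ∈ Icc a (1:ℝ), iteratedDerivWithin 2 φ₂ (Icc a 1) x = G₂ x := by
    intro x hx
    have h := hode₂ x hx
    rw [hG₂def, ← hF₂eq x hx] at *
    field_simp at h ⊢
    linarith
  have hg₁ : ∀ x ∈ Icc (0:ℝ) a, iteratedDerivWithin 2 φ₁ (Icc 0 a) x = G₁ x := by
    intro x hx
    have h := hode₁ x hx
    rw [hG₁def, ← hF₁eq x hx] at *
    field_simp at h ⊢
    linarith
  have hu₂cont : ContinuousOn (derivWithin φ₂ (Icc a 1)) (Icc a 1) :=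
    (hφ₂C.derivWithin (m := 1) hU₂ (by norm_num)).continuousOn
  have hu₁cont : ContinuousOn (derivWithin φ₁ (Icc 0 a)) (Icc 0 a) :=
    (hφ₁C.derivWithin (m := 1) hU₁ (by norm_num)).continuousOn
  have hu₂ := sol_deriv hU₂ hφ₂C hg₂
  have hu₁ := sol_deriv hU₁ hφ₁C hg₁
  have hu₂eq : ∀ x ∈ Icc a (1:ℝ), derivWithin φ₂ (Icc a 1) x = D₂ x :=
    eq_on_Icc_of_deriv h1I₂ hu₂cont hu₂ hD₂ (by rw [hneu, hD₂1])
  have hu₁a : derivWithin φ₁ (Icc 0 a) a = D₁ a := by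
    have h2 := hu₂eq a haI₂
    rw [h2] at htd
    rw [hD₁a]
    field_simp
    linarith [htd]
  have hu₁eq : ∀ x ∈ Icc (0:ℝ) a, derivWithin φ₁ (Icc 0 a) x = D₁ x :=
    eq_on_Icc_of_deriv haI₁ hu₁cont hu₁ hD₁ hu₁a
  have hφ₁d : ∀ x ∈ Icc (0:ℝ) a, HasDerivWithinAt φ₁ (D₁ x) (Icc 0 a) x := by
    intro x hx
    have h := ((hφ₁C.differentiableOn (by norm_num)) x hx).hasDerivWithinAt
    rwa [hu₁eq x hx] at h
  have hφ₂d : ∀ x ∈ Icc a (1:ℝ), HasDerivWithinAt φ₂ (D₂ x) (Icc a 1) x := by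
    intro x hx
    have h := ((hφ₂C.differentiableOn (by norm_num)) x hx).hasDerivWithinAt
    rwa [hu₂eq x hx] at h
  have hφ₁eq : ∀ x ∈ Icc (0:ℝ) a, φ₁ x = ψ₁ x := by
    apply eq_on_Icc_of_deriv h0I₁ hφ₁C.continuousOn hφ₁d hψ₁
    rw [hdir]
    simp [hψ₁def]
  refine ⟨hφ₁eq, ?_⟩
  apply eq_on_Icc_of_deriv haI₂ hφ₂C.continuousOn hφ₂d hψ₂
  rw [← htv, hφ₁eq a haI₁]
  simp [hψ₂def]
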